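/- Let G be a finite connected simple undirected graph, let s be a vertex of G, and let P be a path in G from s to some vertex t such that P is a shortest path (i.e., the length of P equals the graph distance from s to t). Then the sum over all vertices x on P of the degree of x in G is at most 3·|V(G)|. -/

import Mathlib

open SimpleGraph

private lemma dist_eq_takeUntil {V : Type*} [DecidableEq V]
    (G : SimpleGraph V) (hG : G.Connected) {s t : V}
    (p : G.Walk s t) (hshort : p.length = G.dist s t) {x : V} (hx : x ∈ p.support) :
    G.dist s x = (p.takeUntil x hx).length := by
  have h1 : G.dist s x ≤ (p.takeUntil x hx).length := SimpleGraph.dist_le _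
  have h2 : G.dist x t ≤ (p.dropUntil x hx).length := SimpleGraph.dist_le _
  have hlen : (p.takeUntil x hx).length + (p.dropUntil x hx).length = p.length := by
    rw [← SimpleGraph.Walk.length_append, p.take_spec hx]
  have htri := hG.dist_triangle (u := s) (v := x) (w := t)
  omega

private lemma getVert_eq {V : Type*} [DecidableEq V]
    {G : SimpleGraph V} {s t : V}
    (p : G.Walk s t) {x : V} (hx : x ∈ p.support) :
    p.getVert (p.takeUntil x hx).length = x := by
  set q := p.takeUntil x hx with hq
  set r := p.dropUntil x hx with hr
  have hsp : q.append r = p := p.take_spec hx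
  rw [← hsp, SimpleGraph.Walk.getVert_append]
  simp

/-- Let `G` be a finite connected simple undirected graph, `s` a vertex,
and `P` a shortest path from `s` to some vertex `t` (its length equals the graph distance
from `s` to `t`). Then the sum over all vertices `x` on `P` of the degree of `x` in `G`
is at most `3 * |V(G)|`. -/
theorem sum_degree_along_shortest_path_le {V : Type*} [Fintype V] [DecidableEq V]
    (G : SimpleGraph V) (hG : G.Connected) (s t : V)
    (p : G.Walk s t) (hp : p.IsPath) (hshort : p.length = G.dist s t) :
    ∑ x ∈ p.support.toFinset, (G.neighborSet x).ncard ≤ 3 * Fintype.card V := by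
  classical
  -- injectivity of dist s on support
  have hinj : ∀ x ∈ p.support, ∀ y ∈ p.support, G.dist s x = G.dist s y → x = y := by
    intro x hx y hy hxy
    have := getVert_eq p hx
    have h2 := getVert_eq p hy
    rw [← dist_eq_takeUntil G hG p hshort hx] at this
    rw [← dist_eq_takeUntil G hG p hshort hy] at h2
    rw [← this, ← h2, hxy]
  -- rewrite sum
  have hdeg : ∀ x : V, (G.neighborSet x).ncard = (G.neighborFinset x).card := by
    intro x
    rw [← Set.ncard_coe_finset, SimpleGraph.neighborFinset_def, Set.coe_toFinset]
  calc ∑ x ∈ p.support.toFinset, (G.neighborSet x).ncard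
      = ∑ x ∈ p.support.toFinset, ∑ y ∈ Finset.univ, (if G.Adj x y then 1 else 0) := by
        refine Finset.sum_congr rfl fun x _ => ?_
        rw [hdeg, Finset.card_eq_sum_ones, ← Finset.sum_filter]
        congr 1
        ext y
        simp [SimpleGraph.mem_neighborFinset]
    _ = ∑ y ∈ Finset.univ, ∑ x ∈ p.support.toFinset, (if G.Adj x y then 1 else 0) :=
        Finset.sum_comm
    _ = ∑ y ∈ Finset.univ, (p.support.toFinset.filter (fun x => G.Adj x y)).card := by
        refine Finset.sum_congr rfl fun y _ => ?_
        rw [Finset.card_eq_sum_ones, Finset.sum_filter]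
    _ ≤ ∑ _y ∈ (Finset.univ : Finset V), 3 := by
        refine Finset.sum_le_sum fun y _ => ?_
        set T := p.support.toFinset.filter (fun x => G.Adj x y) with hT
        rcases T.eq_empty_or_nonempty with h | h
        · simp [h]
        · obtain ⟨x0, hx0, hmin⟩ := T.exists_min_image (fun x => G.dist s x) h
          have hsub : ∀ x ∈ T, G.dist s x ∈ Finset.Icc (G.dist s x0) (G.dist s x0 + 2) := by
            intro x hx
            simp only [Finset.mem_Icc]
            refine ⟨hmin x hx, ?_⟩
            simp only [hT, Finset.mem_filter, List.mem_toFinset] at hx hx0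
            have hxx : G.dist x0 x ≤ 2 := by
              have := SimpleGraph.dist_le (SimpleGraph.Walk.cons hx0.2
                (SimpleGraph.Walk.cons (G.adj_symm hx.2) SimpleGraph.Walk.nil))
              simpa using this
            have := hG.dist_triangle (u := s) (v := x0) (w := x)
            omega
          have hinjT : Set.InjOn (fun x => G.dist s x) T := by
            intro a ha b hb hab
            simp only [hT, Finset.coe_filter, Set.mem_setOf_eq, List.mem_toFinset,
              Finset.mem_coe, Finset.mem_filter] at ha hb
            exact hinj a ha.1 b hb.1 hab
          calc T.card ≤ (Finset.Icc (G.dist s x0) (G.dist s x0 + 2)).card :=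
                Finset.card_le_card_of_injOn _ hsub hinjT
            _ = 3 := by rw [Nat.card_Icc]; omega
    _ = 3 * Fintype.card V := by simp [mul_comm]
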